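/- Let a, b ≥ 0 and let ν be a (positive) measure on (0,∞) satisfying ∫_{(0,1]} r dν(r) < ∞ and ν((1,∞)) < ∞. Define F : ℝ → ℂ by F(ω) = a − i b ω + ∫_{(0,∞)} (1 − e^{i r ω}) dν(r). Then there exist real constants K, L ≥ 0 such that for all ω ∈ ℝ, √(|ω| · |F(ω)|) ≤ K + L |ω|. In particular, if κ(−iω) is any complex number with |κ(−iω)|² = |ω| · |F(ω)|, then both |Re κ(−iω)| and |Im κ(−iω)| are bounded by K + L |ω|. -/

import Mathlib

open MeasureTheory Set Filter

private lemma aux_poly (c d t : ℝ) (hc : 0 ≤ c) (hd : 0 ≤ d) (ht : 0 ≤ t) :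
    c ^ 2 * t + d ^ 2 * t ^ 2 ≤ (c + (c + d) * t) ^ 2 := by
  nlinarith [mul_nonneg hc hd, mul_nonneg (mul_nonneg hc hd) ht,
    mul_nonneg (mul_nonneg hc hc) ht,
    mul_nonneg (mul_nonneg (mul_nonneg hc hd) ht) ht,
    mul_nonneg (mul_nonneg (mul_nonneg hc hc) ht) ht]

private lemma key_abs (x : ℝ) : ‖1 - Complex.exp ((x : ℂ) * Complex.I)‖ ≤ |x| := by
  have h1 : ‖1 - Complex.exp ((x : ℂ) * Complex.I)‖ ^ 2 ≤ |x| ^ 2 := by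
    rw [Complex.sq_norm, Complex.normSq_apply]
    simp only [Complex.sub_re, Complex.sub_im, Complex.one_re, Complex.one_im,
      Complex.exp_ofReal_mul_I_re, Complex.exp_ofReal_mul_I_im]
    have hc := Real.one_sub_sq_div_two_le_cos (x := x)
    have hs := Real.sin_sq_add_cos_sq x
    have : |x| ^ 2 = x ^ 2 := sq_abs x
    nlinarith [Real.sin_sq_add_cos_sq x]
  calc ‖1 - Complex.exp ((x : ℂ) * Complex.I)‖
      = Real.sqrt (‖1 - Complex.exp ((x : ℂ) * Complex.I)‖ ^ 2) :=
        (Real.sqrt_sq (norm_nonneg _)).symm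
    _ ≤ Real.sqrt (|x| ^ 2) := Real.sqrt_le_sqrt h1
    _ = |x| := Real.sqrt_sq (abs_nonneg x)

/-- Main theorem: for `a, b ≥ 0` and a positive measure `ν` on `(0,∞)` with
`∫_{(0,1]} r dν < ∞` and `ν((1,∞)) < ∞`, the function
`F(ω) = a - i b ω + ∫_{(0,∞)} (1 - e^{i r ω}) dν(r)` satisfies
`√(|ω|·|F(ω)|) ≤ K + L |ω|` for some constants `K, L ≥ 0`; in particular any `κ` with
`|κ|² = |ω|·|F(ω)|` has `|Re κ|, |Im κ| ≤ K + L |ω|`. -/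
theorem attenuation_affine_bound (a b : ℝ) (ha : 0 ≤ a) (hb : 0 ≤ b)
    (ν : Measure ℝ) (hν0 : ν (Set.Iic 0) = 0)
    (h1 : ∫⁻ r in Set.Ioc (0 : ℝ) 1, ENNReal.ofReal r ∂ν ≠ ⊤)
    (h2 : ν (Set.Ioi (1 : ℝ)) ≠ ⊤)
    (F : ℝ → ℂ)
    (hF : ∀ ω : ℝ, F ω = (a : ℂ) - Complex.I * (b : ℂ) * (ω : ℂ) +
      ∫ r in Set.Ioi (0 : ℝ), (1 - Complex.exp (Complex.I * (r : ℂ) * (ω : ℂ))) ∂ν) :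
    ∃ K L : ℝ, 0 ≤ K ∧ 0 ≤ L ∧ ∀ ω : ℝ,
      Real.sqrt (|ω| * ‖F ω‖) ≤ K + L * |ω| ∧
      ∀ κ : ℂ, ‖κ‖ ^ 2 = |ω| * ‖F ω‖ →
        |κ.re| ≤ K + L * |ω| ∧ |κ.im| ≤ K + L * |ω| := by
  set M : ℝ := (∫⁻ r in Set.Ioc (0 : ℝ) 1, ENNReal.ofReal r ∂ν).toReal with hM
  set N : ℝ := (ν (Set.Ioi (1 : ℝ))).toReal with hN
  have hMnn : 0 ≤ M := ENNReal.toReal_nonneg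
  have hNnn : 0 ≤ N := ENNReal.toReal_nonneg
  set C : ℝ := a + 2 * N with hC
  set D : ℝ := b + M with hD
  have hCnn : 0 ≤ C := by positivity
  have hDnn : 0 ≤ D := by positivity
  -- bound on |F ω|
  have hFb : ∀ ω : ℝ, ‖F ω‖ ≤ C + D * |ω| := by
    intro ω
    -- bound the integral
    have hint : ‖∫ r in Set.Ioi (0 : ℝ),
        (1 - Complex.exp (Complex.I * (r : ℂ) * (ω : ℂ))) ∂ν‖ ≤ M * |ω| + 2 * N := by
      have step1 : ‖∫ r in Set.Ioi (0 : ℝ),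
          (1 - Complex.exp (Complex.I * (r : ℂ) * (ω : ℂ))) ∂ν‖ ≤
          (∫⁻ r in Set.Ioi (0 : ℝ),
            ENNReal.ofReal ‖(1 - Complex.exp (Complex.I * (r : ℂ) * (ω : ℂ)))‖ ∂ν).toReal := by
        exact norm_integral_le_lintegral_norm _
      have hsplit : (∫⁻ r in Set.Ioi (0 : ℝ),
          ENNReal.ofReal ‖(1 - Complex.exp (Complex.I * (r : ℂ) * (ω : ℂ)))‖ ∂ν) =
          (∫⁻ r in Set.Ioc (0 : ℝ) 1,
            ENNReal.ofReal ‖(1 - Complex.exp (Complex.I * (r : ℂ) * (ω : ℂ)))‖ ∂ν) +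
          (∫⁻ r in Set.Ioi (1 : ℝ),
            ENNReal.ofReal ‖(1 - Complex.exp (Complex.I * (r : ℂ) * (ω : ℂ)))‖ ∂ν) := by
        rw [← lintegral_union measurableSet_Ioi (Set.Ioc_disjoint_Ioi le_rfl),
          Set.Ioc_union_Ioi_eq_Ioi zero_le_one]
      have hb1 : (∫⁻ r in Set.Ioc (0 : ℝ) 1,
          ENNReal.ofReal ‖(1 - Complex.exp (Complex.I * (r : ℂ) * (ω : ℂ)))‖ ∂ν) ≤
          (∫⁻ r in Set.Ioc (0 : ℝ) 1, ENNReal.ofReal r ∂ν) * ENNReal.ofReal |ω| := by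
        rw [← lintegral_mul_const _ (by measurability)]
        refine setLIntegral_mono (by measurability) ?_
        intro r hr
        rw [← ENNReal.ofReal_mul hr.1.le]
        apply ENNReal.ofReal_le_ofReal
        have : Complex.I * (r : ℂ) * (ω : ℂ) = ((r * ω : ℝ) : ℂ) * Complex.I := by
          push_cast; ring
        rw [this]
        calc ‖(1 - Complex.exp (((r * ω : ℝ) : ℂ) * Complex.I))‖ ≤ |r * ω| := key_abs _
          _ = r * |ω| := by rw [abs_mul, abs_of_pos hr.1]
      have hb2 : (∫⁻ r in Set.Ioi (1 : ℝ),
          ENNReal.ofReal ‖(1 - Complex.exp (Complex.I * (r : ℂ) * (ω : ℂ)))‖ ∂ν) ≤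
          2 * ν (Set.Ioi (1 : ℝ)) := by
        calc (∫⁻ r in Set.Ioi (1 : ℝ),
            ENNReal.ofReal ‖(1 - Complex.exp (Complex.I * (r : ℂ) * (ω : ℂ)))‖ ∂ν) ≤
            ∫⁻ _ in Set.Ioi (1 : ℝ), (2 : ENNReal) ∂ν := by
              refine setLIntegral_mono measurable_const ?_
              intro r _
              have hle : ‖(1 - Complex.exp (Complex.I * (r : ℂ) * (ω : ℂ)))‖ ≤ 2 := by
                calc ‖(1 - Complex.exp (Complex.I * (r : ℂ) * (ω : ℂ)))‖ ≤
                    ‖(1 : ℂ)‖ + ‖Complex.exp (Complex.I * (r : ℂ) * (ω : ℂ))‖ := norm_sub_le _ _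
                  _ = 1 + 1 := by
                      rw [norm_one]
                      congr 1
                      have : Complex.I * (r : ℂ) * (ω : ℂ) = ((r * ω : ℝ) : ℂ) * Complex.I := by
                        push_cast; ring
                      rw [this]
                      exact Complex.norm_exp_ofReal_mul_I _
                  _ = 2 := by norm_num
              calc ENNReal.ofReal ‖(1 - Complex.exp (Complex.I * (r : ℂ) * (ω : ℂ)))‖
                  ≤ ENNReal.ofReal 2 := ENNReal.ofReal_le_ofReal hle
                _ = 2 := by norm_num
          _ = 2 * ν (Set.Ioi (1 : ℝ)) := by
              rw [setLIntegral_const, mul_comm]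
      have hfin : (∫⁻ r in Set.Ioc (0 : ℝ) 1, ENNReal.ofReal r ∂ν) * ENNReal.ofReal |ω| +
          2 * ν (Set.Ioi (1 : ℝ)) ≠ ⊤ := by
        apply ENNReal.add_ne_top.mpr
        constructor
        · exact ENNReal.mul_ne_top h1 ENNReal.ofReal_ne_top
        · exact ENNReal.mul_ne_top (by norm_num) h2
      calc ‖∫ r in Set.Ioi (0 : ℝ),
            (1 - Complex.exp (Complex.I * (r : ℂ) * (ω : ℂ))) ∂ν‖
          ≤ (∫⁻ r in Set.Ioi (0 : ℝ),
            ENNReal.ofReal ‖(1 - Complex.exp (Complex.I * (r : ℂ) * (ω : ℂ)))‖ ∂ν).toReal := step1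
        _ ≤ ((∫⁻ r in Set.Ioc (0 : ℝ) 1, ENNReal.ofReal r ∂ν) * ENNReal.ofReal |ω| +
            2 * ν (Set.Ioi (1 : ℝ))).toReal := by
            apply ENNReal.toReal_mono hfin
            rw [hsplit]
            exact add_le_add hb1 hb2
        _ = M * |ω| + 2 * N := by
            rw [ENNReal.toReal_add (ENNReal.mul_ne_top h1 ENNReal.ofReal_ne_top)
              (ENNReal.mul_ne_top (by norm_num) h2), ENNReal.toReal_mul, ENNReal.toReal_mul,
              ENNReal.toReal_ofReal (abs_nonneg ω)]
            norm_num [hM, hN]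
    rw [hF ω]
    calc ‖(a : ℂ) - Complex.I * (b : ℂ) * (ω : ℂ) +
          ∫ r in Set.Ioi (0 : ℝ), (1 - Complex.exp (Complex.I * (r : ℂ) * (ω : ℂ))) ∂ν‖
        ≤ ‖(a : ℂ) - Complex.I * (b : ℂ) * (ω : ℂ)‖ + (M * |ω| + 2 * N) :=
          le_trans (norm_add_le _ _) (by gcongr)
      _ ≤ (‖(a : ℂ)‖ + ‖Complex.I * (b : ℂ) * (ω : ℂ)‖) +
          (M * |ω| + 2 * N) := by
          gcongr
          simpa using
            norm_sub_le ((a : ℂ)) (Complex.I * (b : ℂ) * (ω : ℂ))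
      _ ≤ C + D * |ω| := by
          simp only [Complex.norm_real, norm_mul, Complex.norm_I, Real.norm_eq_abs]
          rw [abs_of_nonneg ha, abs_of_nonneg hb]
          simp only [hC, hD]
          apply le_of_eq
          ring
  -- final constants
  refine ⟨Real.sqrt C, Real.sqrt C + Real.sqrt D, Real.sqrt_nonneg _,
    by positivity, fun ω => ?_⟩
  have hmain : Real.sqrt (|ω| * ‖F ω‖) ≤
      Real.sqrt C + (Real.sqrt C + Real.sqrt D) * |ω| := by
    rw [Real.sqrt_le_iff]
    constructor
    · positivity
    · have hsc : Real.sqrt C ^ 2 = C := Real.sq_sqrt hCnn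
      have hsd : Real.sqrt D ^ 2 = D := Real.sq_sqrt hDnn
      calc |ω| * ‖F ω‖ ≤ |ω| * (C + D * |ω|) :=
            mul_le_mul_of_nonneg_left (hFb ω) (abs_nonneg ω)
        _ = Real.sqrt C ^ 2 * |ω| + Real.sqrt D ^ 2 * |ω| ^ 2 := by rw [hsc, hsd]; ring
        _ ≤ (Real.sqrt C + (Real.sqrt C + Real.sqrt D) * |ω|) ^ 2 :=
            aux_poly _ _ _ (Real.sqrt_nonneg C) (Real.sqrt_nonneg D) (abs_nonneg ω)
  refine ⟨hmain, fun κ hκ => ?_⟩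
  have habs : ‖κ‖ ≤ Real.sqrt C + (Real.sqrt C + Real.sqrt D) * |ω| := by
    have : ‖κ‖ = Real.sqrt (|ω| * ‖F ω‖) := by
      rw [← hκ, Real.sqrt_sq (norm_nonneg κ)]
    rw [this]; exact hmain
  exact ⟨le_trans (Complex.abs_re_le_norm κ) habs, le_trans (Complex.abs_im_le_norm κ) habs⟩
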